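/- Let (F,→) be an oriented Fano plane and let a,b be distinct points with {a,b,c} the block of F through a and b, oriented a→b→c→a. Then there exists a unique point x ≠ c with a→b→x→a, and {a,b,x} is the block through a and b of the orthogonal Fano plane F_→. -/
import Mathlib


/-- A Steiner triple system: every block has 3 points and every pair of
distinct points lies in exactly one block. -/
def IsSteiner {V : Type*} [DecidableEq V] (B : Finset (Finset V)) : Prop :=
  (∀ b ∈ B, b.card = 3) ∧
  ∀ x y : V, x ≠ y → ∃! b : Finset V, b ∈ B ∧ x ∈ b ∧ y ∈ b

/-- A Fano plane: a Steiner triple system on a 7-point set. -/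
def IsFano {V : Type*} [DecidableEq V] [Fintype V] (B : Finset (Finset V)) : Prop :=
  Fintype.card V = 7 ∧ IsSteiner B

/-- Two systems on the same point set are disjoint if they share no block. -/
def DisjointSTS {V : Type*} [DecidableEq V] (B1 B2 : Finset (Finset V)) : Prop :=
  ∀ b : Finset V, ¬ (b ∈ B1 ∧ b ∈ B2)

/-- Orthogonality of two Steiner triple systems: disjoint, and two distinct
pairs lying in blocks of the first system with a common third point never have
the same third point in the second system. -/
def OrthogonalSTS {V : Type*} [DecidableEq V] (B1 B2 : Finset (Finset V)) : Prop :=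
  DisjointSTS B1 B2 ∧
  ∀ x y z u v a b : V, ({x, y} : Finset V) ≠ ({u, v} : Finset V) →
    ({x, y, z} : Finset V) ∈ B1 → ({u, v, z} : Finset V) ∈ B1 →
    ({x, y, a} : Finset V) ∈ B2 → ({u, v, b} : Finset V) ∈ B2 → a ≠ b

/-- An orientation on a Fano plane `B`: an antisymmetric relation that cyclically
orients every block, and such that for every point `x` the three out-neighbors of
`x` on the three blocks through `x` themselves form a block. -/
def IsOrientation {V : Type*} [DecidableEq V] (B : Finset (Finset V)) (r : V → V → Prop) : Prop :=
  (∀ x y : V, r x y → ¬ r y x) ∧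
  (∀ x1 x2 x3 : V, ({x1, x2, x3} : Finset V) ∈ B →
    (r x1 x2 ∧ r x2 x3 ∧ r x3 x1) ∨ (r x1 x3 ∧ r x3 x2 ∧ r x2 x1)) ∧
  (∀ x y1 z1 y2 z2 y3 z3 : V,
    ({x, y1, z1} : Finset V) ∈ B → ({x, y2, z2} : Finset V) ∈ B → ({x, y3, z3} : Finset V) ∈ B →
    ({x, y1, z1} : Finset V) ≠ ({x, y2, z2} : Finset V) →
    ({x, y1, z1} : Finset V) ≠ ({x, y3, z3} : Finset V) →
    ({x, y2, z2} : Finset V) ≠ ({x, y3, z3} : Finset V) →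
    r x y1 → r x y2 → r x y3 → ({y1, y2, y3} : Finset V) ∈ B)

open scoped Classical in
/-- The block family `T(v) = { x | x → v }`, `v ∈ V`, associated with an
orientation `r` (written `F_→` in the paper). -/
noncomputable def orientBlocks {V : Type*} [DecidableEq V] [Fintype V] (r : V → V → Prop) :
    Finset (Finset V) :=
  Finset.univ.image (fun v => Finset.univ.filter (fun x => r x v))


set_option linter.unusedSectionVars false


section Aux
variable {V : Type*} [DecidableEq V] [Fintype V] {B : Finset (Finset V)} {r : V → V → Prop}

lemma pair_block (hB : IsSteiner B) {x y : V} (h : x ≠ y) :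
    ∃ b, b ∈ B ∧ x ∈ b ∧ y ∈ b := by
  obtain ⟨b, hb, -⟩ := hB.2 x y h
  exact ⟨b, hb⟩

lemma pair_unique (hB : IsSteiner B) {x y : V} (h : x ≠ y) {b1 b2 : Finset V}
    (h1 : b1 ∈ B) (h2 : b2 ∈ B) (hx1 : x ∈ b1) (hy1 : y ∈ b1) (hx2 : x ∈ b2) (hy2 : y ∈ b2) :
    b1 = b2 := by
  obtain ⟨b, -, hu⟩ := hB.2 x y h
  rw [hu b1 ⟨h1, hx1, hy1⟩, hu b2 ⟨h2, hx2, hy2⟩]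

lemma r_irrefl (hr : IsOrientation B r) (x : V) : ¬ r x x := fun h => hr.1 x x h h

lemma block_orient (hB : IsSteiner B) (hr : IsOrientation B r) {b : Finset V} {v : V}
    (hb : b ∈ B) (hv : v ∈ b) :
    ∃ y z, b = {v, y, z} ∧ r v y ∧ r y z ∧ r z v := by
  obtain ⟨x1, x2, x3, h12, h13, h23, hbe⟩ := Finset.card_eq_three.mp (hB.1 b hb)
  subst hbe
  simp only [Finset.mem_insert, Finset.mem_singleton] at hv
  have key : ∀ p q : V, ({x1, x2, x3} : Finset V) = {v, p, q} →
      ∃ y z, ({x1, x2, x3} : Finset V) = {v, y, z} ∧ r v y ∧ r y z ∧ r z v := by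
    intro p q hpq
    rcases hr.2.1 v p q (hpq ▸ hb) with ⟨h1, h2, h3⟩ | ⟨h1, h2, h3⟩
    · exact ⟨p, q, hpq, h1, h2, h3⟩
    · refine ⟨q, p, ?_, h1, h2, h3⟩
      rw [hpq]; ext w; simp; tauto
  rcases hv with h | h | h
  · exact key x2 x3 (by rw [h])
  · exact key x1 x3 (by rw [h]; ext w; simp; tauto)
  · exact key x1 x2 (by rw [h]; ext w; simp; tauto)

lemma r_total (hB : IsSteiner B) (hr : IsOrientation B r) {x y : V} (h : x ≠ y) :
    r x y ∨ r y x := by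
  obtain ⟨b, hb, hx, hy⟩ := pair_block hB h
  obtain ⟨p, q, hbe, h1, h2, h3⟩ := block_orient hB hr hb hx
  subst hbe
  simp only [Finset.mem_insert, Finset.mem_singleton] at hy
  rcases hy with hy | hy | hy
  · exact absurd hy.symm h
  · exact Or.inl (hy ▸ h1)
  · exact Or.inr (hy ▸ h3)

lemma card_T (h7 : Fintype.card V = 7) (hB : IsSteiner B) (v : V) :
    (B.filter (v ∈ ·)).card = 3 := by
  have key : Finset.univ.erase v = (B.filter (v ∈ ·)).biUnion (fun b => b.erase v) := by
    ext w
    simp only [Finset.mem_erase, Finset.mem_univ, and_true, Finset.mem_biUnion,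
      Finset.mem_filter]
    constructor
    · intro hw
      obtain ⟨b, hb, hv, hwb⟩ := pair_block hB (Ne.symm hw)
      exact ⟨b, ⟨hb, hv⟩, hw, hwb⟩
    · rintro ⟨b, -, hw, -⟩
      exact hw
  have hdisj : ∀ b1 ∈ B.filter (v ∈ ·), ∀ b2 ∈ B.filter (v ∈ ·), b1 ≠ b2 →
      Disjoint (b1.erase v) (b2.erase v) := by
    intro b1 hb1 b2 hb2 hne
    simp only [Finset.mem_filter] at hb1 hb2
    rw [Finset.disjoint_left]
    intro w hw1 hw2
    rw [Finset.mem_erase] at hw1 hw2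
    exact hne (pair_unique hB hw1.1 hb1.1 hb2.1 hw1.2 hb1.2 hw2.2 hb2.2)
  have hc1 : (Finset.univ.erase v).card = 6 := by
    rw [Finset.card_erase_of_mem (Finset.mem_univ v), Finset.card_univ, h7]
  rw [key, Finset.card_biUnion hdisj] at hc1
  have hc2 : ∀ b ∈ B.filter (v ∈ ·), (b.erase v).card = 2 := by
    intro b hb
    simp only [Finset.mem_filter] at hb
    rw [Finset.card_erase_of_mem hb.2, hB.1 b hb.1]
  rw [Finset.sum_congr rfl hc2, Finset.sum_const, smul_eq_mul] at hc1
  omega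

lemma out_block (h7 : Fintype.card V = 7) (hB : IsSteiner B) (hr : IsOrientation B r) (v : V) :
    ∃ s, s ∈ B ∧ ∀ w, (w ∈ s ↔ r v w) := by
  obtain ⟨b1, b2, b3, h12, h13, h23, hT⟩ := Finset.card_eq_three.mp (card_T h7 hB v)
  have hmem : ∀ b ∈ ({b1, b2, b3} : Finset (Finset V)), b ∈ B ∧ v ∈ b := by
    intro b hb; rw [← hT, Finset.mem_filter] at hb; exact hb
  obtain ⟨hb1B, hb1v⟩ := hmem b1 (by simp)
  obtain ⟨hb2B, hb2v⟩ := hmem b2 (by simp)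
  obtain ⟨hb3B, hb3v⟩ := hmem b3 (by simp)
  obtain ⟨y1, z1, he1, hy1, hyz1, hz1⟩ := block_orient hB hr hb1B hb1v
  obtain ⟨y2, z2, he2, hy2, hyz2, hz2⟩ := block_orient hB hr hb2B hb2v
  obtain ⟨y3, z3, he3, hy3, hyz3, hz3⟩ := block_orient hB hr hb3B hb3v
  have hblk : ({y1, y2, y3} : Finset V) ∈ B := by
    refine hr.2.2 v y1 z1 y2 z2 y3 z3 (he1 ▸ hb1B) (he2 ▸ hb2B) (he3 ▸ hb3B) ?_ ?_ ?_ hy1 hy2 hy3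
    · rw [← he1, ← he2]; exact h12
    · rw [← he1, ← he3]; exact h13
    · rw [← he2, ← he3]; exact h23
  refine ⟨{y1, y2, y3}, hblk, fun w => ⟨?_, ?_⟩⟩
  · intro hw
    simp only [Finset.mem_insert, Finset.mem_singleton] at hw
    rcases hw with h | h | h <;> subst h <;> assumption
  · intro hw
    have hwv : w ≠ v := fun h => r_irrefl hr v (h ▸ hw)
    obtain ⟨bw, hbwB, hbwv, hbww⟩ := pair_block hB (Ne.symm hwv)
    have : bw ∈ ({b1, b2, b3} : Finset (Finset V)) := by
      rw [← hT, Finset.mem_filter]; exact ⟨hbwB, hbwv⟩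
    simp only [Finset.mem_insert, Finset.mem_singleton] at this
    simp only [Finset.mem_insert, Finset.mem_singleton]
    rcases this with h | h | h <;> subst h <;>
      [ (rw [he1] at hbww; rcases Finset.mem_insert.mp hbww with h | h);
        (rw [he2] at hbww; rcases Finset.mem_insert.mp hbww with h | h);
        (rw [he3] at hbww; rcases Finset.mem_insert.mp hbww with h | h)] <;>
      first
        | exact absurd h hwv
        | (simp only [Finset.mem_insert, Finset.mem_singleton] at h
           rcases h with h | h
           · subst h; tauto
           · subst h; exact absurd hw (fun hh => hr.1 _ _ hh (by assumption)))

lemma blocks_meet (h7 : Fintype.card V = 7) (hB : IsSteiner B) {b1 b2 : Finset V}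
    (h1 : b1 ∈ B) (h2 : b2 ∈ B) : ∃ p, p ∈ b1 ∧ p ∈ b2 := by
  by_cases heq : b1 = b2
  · subst heq
    obtain ⟨p, hp⟩ := Finset.card_pos.mp (by rw [hB.1 b1 h1]; norm_num)
    exact ⟨p, hp, hp⟩
  by_contra hcon
  push_neg at hcon
  obtain ⟨p, hp⟩ := Finset.card_pos.mp (by rw [hB.1 b1 h1]; norm_num : 0 < b1.card)
  have hp2 : p ∉ b2 := hcon p hp
  set f : V → Finset V := fun w =>
    if hw : w = p then b1 else (pair_block hB (fun h => hw h.symm)).choose with hf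
  have hfspec : ∀ w, w ≠ p → f w ∈ B ∧ p ∈ f w ∧ w ∈ f w := by
    intro w hw
    simp only [hf, dif_neg hw]
    exact (pair_block hB (fun h => hw h.symm)).choose_spec
  obtain ⟨x, y, z, hxy, hxz, hyz, hbe⟩ := Finset.card_eq_three.mp (hB.1 b2 h2)
  have hmaps : ∀ w ∈ ({x, y, z} : Finset V), f w ∈ (B.filter (p ∈ ·)).erase b1 := by
    intro w hw
    have hwb2 : w ∈ b2 := hbe ▸ hw
    have hwp : w ≠ p := fun h => hp2 (h ▸ hwb2)
    obtain ⟨hfB, hpf, hwf⟩ := hfspec w hwp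
    rw [Finset.mem_erase, Finset.mem_filter]
    refine ⟨fun h => ?_, hfB, hpf⟩
    exact hcon w (h ▸ hwf) hwb2
  have hcard : ((B.filter (p ∈ ·)).erase b1).card < ({x, y, z} : Finset V).card := by
    rw [Finset.card_erase_of_mem (Finset.mem_filter.mpr ⟨h1, hp⟩), card_T h7 hB p]
    rw [Finset.card_insert_of_notMem (by simp [hxy, hxz]),
      Finset.card_insert_of_notMem (by simp [hyz]), Finset.card_singleton]
    omega
  obtain ⟨w1, hw1, w2, hw2, hne, hfeq⟩ :=
    Finset.exists_ne_map_eq_of_card_lt_of_maps_to hcard hmaps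
  have hw1b2 : w1 ∈ b2 := hbe ▸ hw1
  have hw2b2 : w2 ∈ b2 := hbe ▸ hw2
  have hw1p : w1 ≠ p := fun h => hp2 (h ▸ hw1b2)
  have hw2p : w2 ≠ p := fun h => hp2 (h ▸ hw2b2)
  obtain ⟨hfB, hpf, hw1f⟩ := hfspec w1 hw1p
  obtain ⟨-, -, hw2f⟩ := hfspec w2 hw2p
  have : f w1 = b2 :=
    pair_unique hB hne hfB h2 hw1f (hfeq ▸ hw2f) hw1b2 hw2b2
  exact hp2 (this ▸ hpf)

end Aux

/-- In an oriented Fano plane, for a block `{a,b,c}` oriented `a→b→c→a`, there is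
a unique point `x ≠ c` with `a→b→x→a`, and `{a,b,x}` is the block through `a, b`
of the orthogonal Fano plane `F_→`. -/
theorem unique_second_cyclic_point {V : Type*} [DecidableEq V] [Fintype V]
    (B : Finset (Finset V)) (r : V → V → Prop) (a b c : V)
    (hB : IsFano B) (hr : IsOrientation B r) (hab : a ≠ b)
    (hblock : ({a, b, c} : Finset V) ∈ B) (h1 : r a b) (h2 : r b c) (h3 : r c a) :
    (∃! x : V, x ≠ c ∧ r b x ∧ r x a) ∧
    (∀ x : V, x ≠ c → r b x → r x a → ({a, b, x} : Finset V) ∈ orientBlocks r) := by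
  obtain ⟨h7, hSt⟩ := hB
  obtain ⟨sa, hsaB, hsa⟩ := out_block h7 hSt hr a
  obtain ⟨sb, hsbB, hsb⟩ := out_block h7 hSt hr b
  have hbsa : b ∈ sa := (hsa b).mpr h1
  have hbsb : b ∉ sb := fun h => r_irrefl hr b ((hsb b).mp h)
  have hsane : sa ≠ sb := fun h => hbsb (h ▸ hbsa)
  obtain ⟨v0, hv0a, hv0b⟩ := blocks_meet h7 hSt hsaB hsbB
  have hrav0 : r a v0 := (hsa v0).mp hv0a
  have hrbv0 : r b v0 := (hsb v0).mp hv0b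
  have hcsb : c ∈ sb := (hsb c).mpr h2
  have hcv0 : c ≠ v0 := fun h => hr.1 a v0 hrav0 (h ▸ h3)
  have hasb : a ∉ sb := fun h => hr.1 a b h1 ((hsb a).mp h)
  have hsub : ({c, v0} : Finset V) ⊆ sb := by
    intro w hw
    simp only [Finset.mem_insert, Finset.mem_singleton] at hw
    rcases hw with rfl | rfl
    · exact hcsb
    · exact hv0b
  have hcard1 : (sb \ {c, v0}).card = 1 := by
    rw [Finset.card_sdiff_of_subset hsub, hSt.1 sb hsbB,
      Finset.card_insert_of_notMem (by simp [hcv0]), Finset.card_singleton]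
  obtain ⟨x0, hx0⟩ := Finset.card_eq_one.mp hcard1
  have hx0mem : x0 ∈ sb ∧ x0 ∉ ({c, v0} : Finset V) :=
    Finset.mem_sdiff.mp (hx0 ▸ Finset.mem_singleton_self x0)
  have hx0c : x0 ≠ c := by
    intro h; exact hx0mem.2 (by simp [h])
  have hx0v0 : x0 ≠ v0 := by
    intro h; exact hx0mem.2 (by simp [h])
  have hsbeq : sb = {c, v0, x0} := by
    refine (Finset.eq_of_subset_of_card_le ?_ ?_).symm
    · intro w hw
      simp only [Finset.mem_insert, Finset.mem_singleton] at hw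
      rcases hw with rfl | rfl | rfl
      · exact hcsb
      · exact hv0b
      · exact hx0mem.1
    · rw [hSt.1 sb hsbB, Finset.card_insert_of_notMem (by simp [hcv0, Ne.symm hx0c]),
        Finset.card_insert_of_notMem (by simp [Ne.symm hx0v0]), Finset.card_singleton]
  have hrbx0 : r b x0 := (hsb x0).mp hx0mem.1
  have hx0a : x0 ≠ a := fun h => hasb (h ▸ hx0mem.1)
  have hnax0 : ¬ r a x0 := by
    intro h
    exact hsane (pair_unique hSt hx0v0 hsaB hsbB ((hsa x0).mpr h) hv0a hx0mem.1 hv0b)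
  have hrx0a : r x0 a := by
    rcases r_total hSt hr hx0a with h | h
    · exact h
    · exact absurd h hnax0
  have huniq : ∀ x', x' ≠ c → r b x' → r x' a → x' = x0 := by
    intro x' hc' hb' ha'
    have hx'sb : x' ∈ sb := (hsb x').mpr hb'
    rw [hsbeq] at hx'sb
    simp only [Finset.mem_insert, Finset.mem_singleton] at hx'sb
    rcases hx'sb with rfl | rfl | rfl
    · exact absurd rfl hc'
    · exact absurd ha' (fun h => hr.1 a x' hrav0 h)
    · rfl
  refine ⟨⟨x0, ⟨hx0c, hrbx0, hrx0a⟩, fun x' h => huniq x' h.1 h.2.1 h.2.2⟩, ?_⟩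
  intro x hxc hbx hxa
  have hxx0 : x = x0 := huniq x hxc hbx hxa
  subst hxx0
  have hrx0v0 : r x v0 := by
    by_contra hcon
    rcases hr.2.1 c v0 x (hsbeq ▸ hsbB) with ⟨-, h5, h6⟩ | ⟨-, h5, -⟩
    · obtain ⟨sx, hsxB, hsx⟩ := out_block h7 hSt hr x
      have hac : a ≠ c := fun h => r_irrefl hr a (h ▸ h3)
      have hxabc : sx = {a, b, c} :=
        pair_unique hSt hac hsxB hblock ((hsx a).mpr hxa) ((hsx c).mpr h6)
          (by simp) (by simp)
      exact hr.1 b x hbx ((hsx b).mp (hxabc ▸ (by simp : b ∈ ({a, b, c} : Finset V))))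
    · exact hcon h5
  obtain ⟨sv, hsvB, hsv⟩ := out_block h7 hSt hr v0
  have hNsub : ∀ w, r w v0 → w = a ∨ w = b ∨ w = x := by
    intro w hw
    by_contra hcon
    push_neg at hcon
    obtain ⟨hwa, hwb, hwx⟩ := hcon
    have hsmall : ({a, b, x, w} : Finset V) ⊆ Finset.univ \ insert v0 sv := by
      intro z hz
      simp only [Finset.mem_insert, Finset.mem_singleton] at hz
      have hzv : r z v0 := by rcases hz with rfl | rfl | rfl | rfl <;> assumption
      simp only [Finset.mem_sdiff, Finset.mem_univ, Finset.mem_insert, true_and, not_or]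
      exact ⟨fun h => r_irrefl hr v0 (h ▸ hzv), fun h => hr.1 z v0 hzv ((hsv z).mp h)⟩
    have hbx0 : b ≠ x := fun h => r_irrefl hr b (h ▸ hbx)
    have hc1 : ({a, b, x, w} : Finset V).card = 4 := by
      rw [Finset.card_insert_of_notMem (by simp [hab, Ne.symm hx0a, Ne.symm hwa]),
        Finset.card_insert_of_notMem (by simp [hbx0, Ne.symm hwb]),
        Finset.card_insert_of_notMem (by simp [Ne.symm hwx]), Finset.card_singleton]
    have hc2 : (Finset.univ \ insert v0 sv).card = 3 := by
      rw [Finset.card_sdiff_of_subset (Finset.subset_univ _), Finset.card_univ, h7,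
        Finset.card_insert_of_notMem (fun h => r_irrefl hr v0 ((hsv v0).mp h)),
        hSt.1 sv hsvB]
    have := Finset.card_le_card hsmall
    omega
  simp only [orientBlocks, Finset.mem_image, Finset.mem_univ, true_and]
  refine ⟨v0, ?_⟩
  ext z
  simp only [Finset.mem_filter, Finset.mem_univ, true_and, Finset.mem_insert,
    Finset.mem_singleton]
  constructor
  · exact hNsub z
  · rintro (rfl | rfl | rfl) <;> assumption
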